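/- arXiv:2103.00038 — 2 statements merged into one kernel-verified Lean document; each statement's English description precedes it below -/
import Mathlib

section
/- Let ν > 2 and set k = √(ν² − 4)/ν. Then ∫₀^∞ ( √(ν² − 2 + 2·cosh(2s)) − eˢ ) ds = ν·(K(k) − E(k)) + 1, where the integrand is integrable on (0,∞). -/
open Real MeasureTheory Filter Set

/-- Complete elliptic integral of the first kind. -/
noncomputable def ellipticK (k : ℝ) : ℝ :=
  ∫ θ in (0:ℝ)..(Real.pi / 2), 1 / Real.sqrt (1 - k ^ 2 * Real.sin θ ^ 2)

/-- Complete elliptic integral of the second kind. -/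
noncomputable def ellipticE (k : ℝ) : ℝ :=
  ∫ θ in (0:ℝ)..(Real.pi / 2), Real.sqrt (1 - k ^ 2 * Real.sin θ ^ 2)

noncomputable def Wf (ν : ℝ) (s : ℝ) : ℝ := Real.sqrt (ν ^ 2 + 4 * Real.sinh s ^ 2)
noncomputable def φf (s : ℝ) : ℝ := Real.arcsin (Real.sinh s / Real.cosh s)
noncomputable def hK (ν k : ℝ) (θ : ℝ) : ℝ :=
  ν / Real.sqrt (1 - k ^ 2 * Real.sin θ ^ 2) - ν * Real.sqrt (1 - k ^ 2 * Real.sin θ ^ 2)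
noncomputable def Hf (ν : ℝ) (s : ℝ) : ℝ := ν ^ 2 / Wf ν s - Wf ν s / Real.cosh s ^ 2
noncomputable def Af (ν : ℝ) (s : ℝ) : ℝ := Real.sinh s * Wf ν s / Real.cosh s - Real.exp s

lemma Wf_eq (ν : ℝ) (hν : 2 < ν) (s : ℝ) :
    Real.sqrt (ν ^ 2 - 2 + 2 * Real.cosh (2 * s)) = Wf ν s := by
  rw [Wf]
  congr 1
  rw [Real.cosh_two_mul, Real.cosh_sq]
  ring

lemma Wf_cont (ν : ℝ) : Continuous (Wf ν) :=
  Real.continuous_sqrt.comp (by continuity)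

lemma Wf_ge (ν : ℝ) (hν : 2 < ν) (s : ℝ) : Real.exp s ≤ Wf ν s := by
  have h1 : Real.sinh s = (Real.exp s - Real.exp (-s)) / 2 := Real.sinh_eq s
  have h2 : Real.exp s * Real.exp (-s) = 1 := by rw [← Real.exp_add]; simp
  have hν4 : 4 < ν ^ 2 := by nlinarith
  have h1' : Real.sinh s ^ 2 = ((Real.exp s - Real.exp (-s)) / 2) ^ 2 := by rw [h1]
  have h3 : (Real.exp s) ^ 2 ≤ ν ^ 2 + 4 * Real.sinh s ^ 2 := by
    rw [h1']; nlinarith [sq_nonneg (Real.exp (-s))]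
  calc Real.exp s = Real.sqrt ((Real.exp s) ^ 2) := (Real.sqrt_sq (Real.exp_pos s).le).symm
    _ ≤ Wf ν s := Real.sqrt_le_sqrt h3

lemma Wf_le (ν : ℝ) (hν : 2 < ν) {s : ℝ} (hs : 0 ≤ s) :
    Wf ν s ≤ Real.exp s + ν ^ 2 * Real.exp (-s) := by
  have h1 : Real.sinh s = (Real.exp s - Real.exp (-s)) / 2 := Real.sinh_eq s
  have h2 : Real.exp s * Real.exp (-s) = 1 := by rw [← Real.exp_add]; simp
  have h4 : Real.exp (-s) ≤ 1 := Real.exp_le_one_iff.2 (by linarith)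
  have h5 : 0 < Real.exp (-s) := Real.exp_pos _
  have hν4 : 4 < ν ^ 2 := by nlinarith
  have h1' : Real.sinh s ^ 2 = ((Real.exp s - Real.exp (-s)) / 2) ^ 2 := by rw [h1]
  have h6 : 0 ≤ (ν ^ 4 - 1) * (Real.exp (-s)) ^ 2 :=
    mul_nonneg (by nlinarith [sq_nonneg (ν ^ 2 - 4)]) (sq_nonneg _)
  have h3 : ν ^ 2 + 4 * Real.sinh s ^ 2 ≤ (Real.exp s + ν ^ 2 * Real.exp (-s)) ^ 2 := by
    rw [h1']; nlinarith [sq_nonneg (Real.exp (-s))]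
  calc Wf ν s ≤ Real.sqrt ((Real.exp s + ν ^ 2 * Real.exp (-s)) ^ 2) := Real.sqrt_le_sqrt h3
    _ = _ := Real.sqrt_sq (by positivity)

lemma Wf_sq (ν : ℝ) (hν : 2 < ν) (s : ℝ) : Wf ν s ^ 2 = ν ^ 2 + 4 * Real.sinh s ^ 2 := by
  have h : (0:ℝ) ≤ ν ^ 2 + 4 * Real.sinh s ^ 2 := by nlinarith [sq_nonneg (Real.sinh s)]
  exact Real.sq_sqrt h

lemma Wf_pos (ν : ℝ) (hν : 2 < ν) (s : ℝ) : 0 < Wf ν s := by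
  apply Real.sqrt_pos.2; nlinarith [sq_nonneg (Real.sinh s)]

lemma Wf_hasDerivAt (ν : ℝ) (hν : 2 < ν) (s : ℝ) :
    HasDerivAt (Wf ν) (4 * Real.sinh s * Real.cosh s / Wf ν s) s := by
  have hinner : HasDerivAt (fun s => ν ^ 2 + 4 * Real.sinh s ^ 2)
      (4 * (2 * Real.sinh s * Real.cosh s)) s := by
    have h := ((Real.hasDerivAt_sinh s).pow 2).const_mul (4:ℝ)
    simpa [mul_comm, mul_assoc, mul_left_comm] using h.const_add (ν ^ 2)
  have hne : ν ^ 2 + 4 * Real.sinh s ^ 2 ≠ 0 := by nlinarith [sq_nonneg (Real.sinh s)]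
  have := hinner.sqrt hne
  convert this using 1
  · rfl
  have hne' := (Wf_pos ν hν s).ne'
  rw [show Real.sqrt (ν ^ 2 + 4 * Real.sinh s ^ 2) = Wf ν s from rfl]
  field_simp

lemma Af_hasDerivAt (ν : ℝ) (hν : 2 < ν) (s : ℝ) :
    HasDerivAt (Af ν) ((Wf ν s - Real.exp s) - Hf ν s) s := by
  have hW := Wf_hasDerivAt ν hν s
  have hWpos := Wf_pos ν hν s
  have hcosh : Real.cosh s ≠ 0 := (Real.cosh_pos s).ne'
  have hnum : HasDerivAt (fun s => Real.sinh s * Wf ν s)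
      (Real.cosh s * Wf ν s + Real.sinh s * (4 * Real.sinh s * Real.cosh s / Wf ν s)) s :=
    (Real.hasDerivAt_sinh s).mul hW
  have hdiv := hnum.div (Real.hasDerivAt_cosh s) hcosh
  have hA := hdiv.sub (Real.hasDerivAt_exp s)
  convert hA using 1
  · rfl
  · rfl
  · rfl
  rw [Hf]
  have hWsq := Wf_sq ν hν s
  have hid : Real.cosh s ^ 2 - Real.sinh s ^ 2 = 1 := Real.cosh_sq_sub_sinh_sq s
  field_simp
  nlinarith [hWsq, hid, sq_nonneg (Wf ν s), Real.cosh_pos s]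

lemma Af_abs_le (ν : ℝ) (hν : 2 < ν) {s : ℝ} (hs : 0 ≤ s) :
    |Af ν s| ≤ (2 + 2 * ν ^ 2) * Real.exp (-s) := by
  have hWpos := Wf_pos ν hν s
  have hWge := Wf_ge ν hν s
  have hWle := Wf_le ν hν hs
  have hsinh0 : 0 ≤ Real.sinh s := by
    rw [← Real.sinh_zero]; exact Real.sinh_le_sinh.2 hs
  have hcp : (0:ℝ) < Real.cosh s := Real.cosh_pos s
  have hcs : Real.cosh s - Real.sinh s = Real.exp (-s) := Real.cosh_sub_sinh s
  have hsc : Real.sinh s ≤ Real.cosh s := by nlinarith [Real.exp_pos (-s)]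
  have hexps : 1 ≤ Real.exp s := Real.one_le_exp (by linarith)
  have hexpneg : Real.exp (-s) ≤ 1 := Real.exp_le_one_iff.2 (by linarith)
  have hprod : Real.exp s * Real.exp (-s) = 1 := by rw [← Real.exp_add]; simp
  have hcosh_ge : Real.exp s ≤ 2 * Real.cosh s := by
    rw [Real.cosh_eq]; nlinarith [Real.exp_pos (-s)]
  rw [abs_le]
  constructor
  · -- lower bound: Af ≥ -(2+2ν²) e^{-s}
    rw [Af, div_sub' hcp.ne', le_div_iff₀ hcp]
    -- -(2+2ν²)e^{-s} * cosh ≤ sinh * W - exp s * cosh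
    -- sinh*W - exp s * cosh = (sinh - cosh) * W + cosh*(W - exp s) ≥ -(e^{-s}) * W
    have h1 : -(Real.exp (-s) * Wf ν s) ≤ Real.sinh s * Wf ν s - Real.exp s * Real.cosh s := by
      nlinarith [mul_le_mul_of_nonneg_left hWge hcp.le]
    have hW2 : Wf ν s ≤ (2 + 2 * ν ^ 2) * Real.cosh s := by nlinarith [sq_nonneg ν]
    have h2 : Real.exp (-s) * Wf ν s ≤ Real.exp (-s) * ((2 + 2 * ν ^ 2) * Real.cosh s) :=
      mul_le_mul_of_nonneg_left hW2 (Real.exp_pos _).le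
    nlinarith
  · -- upper bound
    rw [Af, div_sub' hcp.ne', div_le_iff₀ hcp]
    have h1 : Real.sinh s * Wf ν s - Real.exp s * Real.cosh s ≤ (Wf ν s - Real.exp s) * Real.cosh s := by
      nlinarith [mul_le_mul_of_nonneg_right hsc hWpos.le]
    have h2 : Wf ν s - Real.exp s ≤ ν ^ 2 * Real.exp (-s) := by linarith
    have h3 := mul_le_mul_of_nonneg_right h2 hcp.le
    nlinarith [mul_nonneg (Real.exp_pos (-s)).le hcp.le, sq_nonneg ν]

lemma Af_tendsto (ν : ℝ) (hν : 2 < ν) : Tendsto (Af ν) atTop (nhds 0) := by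
  have hb : Tendsto (fun s : ℝ => (2 + 2 * ν ^ 2) * Real.exp (-s)) atTop (nhds 0) := by
    rw [show (0:ℝ) = (2 + 2*ν^2) * 0 by ring]
    exact Real.tendsto_exp_neg_atTop_nhds_zero.const_mul _
  have ha : ∀ᶠ s in atTop, ‖Af ν s‖ ≤ (2 + 2 * ν ^ 2) * Real.exp (-s) := by
    filter_upwards [eventually_ge_atTop (0:ℝ)] with s hs
    exact Af_abs_le ν hν hs
  exact squeeze_zero_norm' ha hb

lemma tanh_lt_one' (s : ℝ) : Real.sinh s / Real.cosh s < 1 := by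
  rw [div_lt_one (Real.cosh_pos s)]
  nlinarith [Real.cosh_sub_sinh s, Real.exp_pos (-s)]

lemma neg_one_lt_tanh' (s : ℝ) : -1 < Real.sinh s / Real.cosh s := by
  rw [lt_div_iff₀ (Real.cosh_pos s)]
  nlinarith [Real.cosh_add_sinh s, Real.exp_pos s]

lemma φf_hasDerivAt (s : ℝ) : HasDerivAt φf (1 / Real.cosh s) s := by
  have hcp := Real.cosh_pos s
  have hinner : HasDerivAt (fun s => Real.sinh s / Real.cosh s)
      ((Real.cosh s * Real.cosh s - Real.sinh s * Real.sinh s) / Real.cosh s ^ 2) s :=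
    (Real.hasDerivAt_sinh s).div (Real.hasDerivAt_cosh s) hcp.ne'
  have harc := Real.hasDerivAt_arcsin (ne_of_gt (neg_one_lt_tanh' s)) (ne_of_lt (tanh_lt_one' s))
  have := harc.comp s hinner
  convert this using 1
  · rfl
  · rfl
  · rfl
  have h1 : 1 - (Real.sinh s / Real.cosh s) ^ 2 = (1 / Real.cosh s) ^ 2 := by
    field_simp
    exact Real.cosh_sq_sub_sinh_sq s
  rw [h1, Real.sqrt_sq (by positivity)]
  have h2 : Real.cosh s * Real.cosh s - Real.sinh s * Real.sinh s = 1 := by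
    nlinarith [Real.cosh_sq_sub_sinh_sq s]
  rw [h2]
  field_simp

lemma φf_injOn : Set.InjOn φf (Set.Ioi 0) := by
  intro a _ b _ hab
  have h1 : Real.sinh a / Real.cosh a = Real.sinh b / Real.cosh b := by
    apply Real.injOn_arcsin _ _ hab
    · exact ⟨(neg_one_lt_tanh' a).le, (tanh_lt_one' a).le⟩
    · exact ⟨(neg_one_lt_tanh' b).le, (tanh_lt_one' b).le⟩
  have h2 : Real.sinh a * Real.cosh b = Real.sinh b * Real.cosh a := by
    field_simp at h1
    linarith [h1]
  have h3 : Real.sinh (a - b) = 0 := by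
    rw [Real.sinh_sub]; linarith
  have := Real.sinh_injective (by rw [h3, Real.sinh_zero] : Real.sinh (a-b) = Real.sinh 0)
  linarith [this]

lemma φf_image : φf '' (Set.Ioi 0) = Set.Ioo 0 (Real.pi / 2) := by
  ext θ
  constructor
  · rintro ⟨s, hs, rfl⟩
    have hs' : (0:ℝ) < s := hs
    have ht0 : 0 < Real.sinh s / Real.cosh s := by
      apply div_pos _ (Real.cosh_pos s)
      rwa [← Real.sinh_zero, Real.sinh_lt_sinh]
    exact ⟨Real.arcsin_pos.2 ht0, Real.arcsin_lt_pi_div_two.2 (tanh_lt_one' s)⟩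
  · rintro ⟨hθ0, hθ1⟩
    have hcos : 0 < Real.cos θ := Real.cos_pos_of_mem_Ioo ⟨by linarith [Real.pi_pos], hθ1⟩
    have hsin : 0 < Real.sin θ := Real.sin_pos_of_pos_of_lt_pi hθ0 (by linarith [Real.pi_pos])
    refine ⟨Real.arsinh (Real.tan θ), ?_, ?_⟩
    · exact Real.arsinh_pos_iff.2 (Real.tan_pos_of_pos_of_lt_pi_div_two hθ0 hθ1)
    · have hsinh : Real.sinh (Real.arsinh (Real.tan θ)) = Real.tan θ := Real.sinh_arsinh _
      have hcosh : Real.cosh (Real.arsinh (Real.tan θ)) = 1 / Real.cos θ := by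
        have hc2 : Real.cosh (Real.arsinh (Real.tan θ)) ^ 2 = Real.tan θ ^ 2 + 1 := by
          rw [Real.cosh_sq, hsinh]
        have ht2 : Real.tan θ ^ 2 + 1 = (1 / Real.cos θ) ^ 2 := by
          rw [Real.tan_eq_sin_div_cos]
          field_simp
          exact Real.sin_sq_add_cos_sq θ
        calc Real.cosh (Real.arsinh (Real.tan θ))
            = Real.sqrt (Real.cosh (Real.arsinh (Real.tan θ)) ^ 2) :=
              (Real.sqrt_sq (Real.cosh_pos _).le).symm
          _ = Real.sqrt ((1 / Real.cos θ) ^ 2) := by rw [hc2, ht2]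
          _ = 1 / Real.cos θ := Real.sqrt_sq (by positivity)
      rw [φf, hsinh, hcosh, Real.tan_eq_sin_div_cos]
      rw [show Real.sin θ / Real.cos θ / (1 / Real.cos θ) = Real.sin θ by field_simp]
      exact Real.arcsin_sin (by linarith) (by linarith)

lemma sqrt_identity (ν : ℝ) (hν : 2 < ν) (k : ℝ) (hk2 : k ^ 2 = (ν ^ 2 - 4) / ν ^ 2) (s : ℝ) :
    Real.sqrt (1 - k ^ 2 * (Real.sinh s / Real.cosh s) ^ 2) = Wf ν s / (ν * Real.cosh s) := by
  have hν0 : (0:ℝ) < ν := by linarith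
  have hcp := Real.cosh_pos s
  have h1 : (Wf ν s / (ν * Real.cosh s)) ^ 2 = 1 - k ^ 2 * (Real.sinh s / Real.cosh s) ^ 2 := by
    rw [div_pow, Wf_sq ν hν s, hk2]
    field_simp
    linear_combination (-ν ^ 2) * Real.cosh_sq_sub_sinh_sq s
  rw [← h1]
  have hWp := Wf_pos ν hν s
  exact Real.sqrt_sq (by positivity)

lemma integrand_identity (ν : ℝ) (hν : 2 < ν) (k : ℝ) (hk2 : k ^ 2 = (ν ^ 2 - 4) / ν ^ 2) (s : ℝ) :
    |1 / Real.cosh s| • hK ν k (φf s) = Hf ν s := by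
  have hν0 : (0:ℝ) < ν := by linarith
  have hcp := Real.cosh_pos s
  have hWpos := Wf_pos ν hν s
  have hsin : Real.sin (φf s) = Real.sinh s / Real.cosh s :=
    Real.sin_arcsin (neg_one_lt_tanh' s).le (tanh_lt_one' s).le
  rw [hK, hsin, sqrt_identity ν hν k hk2 s, abs_of_pos (by positivity), smul_eq_mul, Hf]
  field_simp

/-- For `ν > 2` and `k = √(ν² − 4)/ν`,
`∫₀^∞ (√(ν² − 2 + 2 cosh 2s) − eˢ) ds = ν(K(k) − E(k)) + 1`. -/
theorem stmt_2 (ν : ℝ) (hν : 2 < ν) (k : ℝ) (hk : k = Real.sqrt (ν ^ 2 - 4) / ν) :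
    IntegrableOn
      (fun s => Real.sqrt (ν ^ 2 - 2 + 2 * Real.cosh (2 * s)) - Real.exp s)
      (Set.Ioi 0) ∧
    ∫ s in Set.Ioi (0:ℝ),
        (Real.sqrt (ν ^ 2 - 2 + 2 * Real.cosh (2 * s)) - Real.exp s) =
      ν * (ellipticK k - ellipticE k) + 1 := by
  have hν0 : (0:ℝ) < ν := by linarith
  have hν4 : (0:ℝ) < ν ^ 2 - 4 := by nlinarith
  have hk2 : k ^ 2 = (ν ^ 2 - 4) / ν ^ 2 := by
    rw [hk, div_pow, Real.sq_sqrt hν4.le]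
  have hΔpos : ∀ θ : ℝ, 0 < 1 - k ^ 2 * Real.sin θ ^ 2 := by
    intro θ
    have h1 : Real.sin θ ^ 2 ≤ 1 := Real.sin_sq_le_one θ
    have h2 : 0 ≤ Real.sin θ ^ 2 := sq_nonneg _
    rw [hk2]
    rw [div_mul_eq_mul_div, sub_pos, div_lt_one (by positivity)]
    nlinarith
  -- rewrite integrand via Wf
  have hfun : (fun s => Real.sqrt (ν ^ 2 - 2 + 2 * Real.cosh (2 * s)) - Real.exp s)
      = fun s => Wf ν s - Real.exp s := funext fun s => by rw [Wf_eq ν hν s]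
  rw [hfun]
  -- integrability of g
  have hgInt : IntegrableOn (fun s => Wf ν s - Real.exp s) (Set.Ioi 0) := by
    have hbound : IntegrableOn (fun s => ν ^ 2 * Real.exp (-(1:ℝ) * s)) (Set.Ioi 0) :=
      (exp_neg_integrableOn_Ioi 0 one_pos).const_mul _
    apply Integrable.mono' hbound
    · exact ((Wf_cont ν).sub Real.continuous_exp).aestronglyMeasurable
    · refine (ae_restrict_iff' measurableSet_Ioi).2 (ae_of_all _ fun s hs => ?_)
      have hs' : (0:ℝ) ≤ s := (le_of_lt hs)
      have h1 := Wf_ge ν hν s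
      have h2 := Wf_le ν hν hs'
      rw [Real.norm_eq_abs, abs_of_nonneg (by linarith)]
      rw [neg_one_mul]
      linarith
  refine ⟨hgInt, ?_⟩
  -- continuity of the elliptic integrands
  have hcontΔ : Continuous (fun θ : ℝ => Real.sqrt (1 - k ^ 2 * Real.sin θ ^ 2)) :=
    Real.continuous_sqrt.comp (by continuity)
  have hΔsqrtpos : ∀ θ : ℝ, 0 < Real.sqrt (1 - k ^ 2 * Real.sin θ ^ 2) :=
    fun θ => Real.sqrt_pos.2 (hΔpos θ)
  have hcontK : Continuous (fun θ : ℝ => 1 / Real.sqrt (1 - k ^ 2 * Real.sin θ ^ 2)) :=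
    continuous_const.div hcontΔ fun θ => (hΔsqrtpos θ).ne'
  have hcont_hK : Continuous (hK ν k) := by
    unfold hK
    exact (continuous_const.div hcontΔ fun θ => (hΔsqrtpos θ).ne').sub (continuous_const.mul hcontΔ)
  -- elliptic side
  have hpi2 : (0:ℝ) ≤ Real.pi / 2 := by positivity
  have hEllip : ν * (ellipticK k - ellipticE k) = ∫ θ in Set.Ioo 0 (Real.pi / 2), hK ν k θ := by
    rw [ellipticK, ellipticE, ← intervalIntegral.integral_sub
        (hcontK.intervalIntegrable _ _) (hcontΔ.intervalIntegrable _ _),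
      ← intervalIntegral.integral_const_mul,
      intervalIntegral.integral_of_le hpi2, integral_Ioc_eq_integral_Ioo]
    congr 1
    funext θ
    rw [hK]
    ring
  -- change of variables
  have hder : ∀ s ∈ Set.Ioi (0:ℝ), HasDerivWithinAt φf (1 / Real.cosh s) (Set.Ioi 0) s :=
    fun s _ => (φf_hasDerivAt s).hasDerivWithinAt
  have hCOV : ∫ θ in Set.Ioo 0 (Real.pi / 2), hK ν k θ = ∫ s in Set.Ioi (0:ℝ), Hf ν s := by
    rw [← φf_image, integral_image_eq_integral_abs_deriv_smul measurableSet_Ioi hder φf_injOn]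
    congr 1
    funext s
    exact integrand_identity ν hν k hk2 s
  have hHint : IntegrableOn (Hf ν) (Set.Ioi 0) := by
    have h1 : IntegrableOn (hK ν k) (Set.Ioo 0 (Real.pi / 2)) := by
      apply (hcont_hK.integrableOn_Icc (a := 0) (b := Real.pi/2)).mono_set Set.Ioo_subset_Icc_self
    rw [← φf_image] at h1
    rw [integrableOn_image_iff_integrableOn_abs_deriv_smul measurableSet_Ioi hder φf_injOn] at h1
    have h2 : (fun s => |1 / Real.cosh s| • hK ν k (φf s)) = Hf ν :=
      funext fun s => integrand_identity ν hν k hk2 s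
    rwa [h2] at h1
  -- FTC
  have hAf0 : Af ν 0 = -1 := by
    rw [Af]
    simp [Real.sinh_zero, Real.exp_zero]
  have hAcont : Continuous (Af ν) :=
    ((Real.continuous_sinh.mul (Wf_cont ν)).div Real.continuous_cosh
      fun s => (Real.cosh_pos s).ne').sub Real.continuous_exp
  have hFTC : ∫ s in Set.Ioi (0:ℝ), ((Wf ν s - Real.exp s) - Hf ν s) = 1 := by
    rw [integral_Ioi_of_hasDerivAt_of_tendsto (hAcont.continuousWithinAt)
      (fun s _ => Af_hasDerivAt ν hν s) (hgInt.sub hHint) (Af_tendsto ν hν), hAf0]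
    norm_num
  have hsub : ∫ s in Set.Ioi (0:ℝ), ((Wf ν s - Real.exp s) - Hf ν s)
      = (∫ s in Set.Ioi (0:ℝ), (Wf ν s - Real.exp s)) - ∫ s in Set.Ioi (0:ℝ), Hf ν s :=
    integral_sub hgInt hHint
  rw [hEllip, hCOV]
  linarith [hFTC, hsub]
end

section
/- Let ν > 2 and set k = √(ν² − 4)/ν. Then, as x → ∞, ∫₀ˣ √(ν² − 2 + 2·cosh(2s)) ds = ν·(K(k) − E(k)) + eˣ + O(e^{−x}); that is, the function x ↦ ∫₀ˣ √(ν² − 2 + 2·cosh(2s)) ds − ν·(K(k) − E(k)) − eˣ is O(e^{−x}) as x → ∞. -/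
open Real Filter Asymptotics

set_option maxHeartbeats 1000000 in
/-- For `ν > 2` and `k = √(ν² − 4)/ν`, as `x → ∞`,
`∫₀ˣ √(ν² − 2 + 2 cosh 2s) ds = ν(K(k) − E(k)) + eˣ + O(e^{−x})`. -/
theorem stmt_3 (ν : ℝ) (hν : 2 < ν) (k : ℝ) (hk : k = Real.sqrt (ν ^ 2 - 4) / ν) :
    (fun x : ℝ =>
        (∫ s in (0:ℝ)..x, Real.sqrt (ν ^ 2 - 2 + 2 * Real.cosh (2 * s)))
          - ν * (ellipticK k - ellipticE k) - Real.exp x)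
      =O[atTop] (fun x => Real.exp (-x)) := by
  have hν0 : (0:ℝ) < ν := by linarith
  have hν4 : (0:ℝ) < ν^2 - 4 := by nlinarith
  have hk2 : k^2 = (ν^2-4)/ν^2 := by rw [hk, div_pow, Real.sq_sqrt hν4.le]
  have hk0 : 0 ≤ k := by rw [hk]; positivity
  have hk1 : k^2 < 1 := by rw [hk2, div_lt_one (by positivity)]; linarith
  -- positivity of 1 - k² sin² θ
  have hin : ∀ θ : ℝ, 1 - k^2 ≤ 1 - k^2 * Real.sin θ^2 := by
    intro θ
    nlinarith [Real.sin_sq_le_one θ, sq_nonneg k, sq_nonneg (Real.sin θ)]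
  have hinpos : ∀ θ : ℝ, 0 < 1 - k^2 * Real.sin θ^2 := fun θ => lt_of_lt_of_le (by linarith) (hin θ)
  set f : ℝ → ℝ := fun θ => 1/Real.sqrt (1 - k^2 * Real.sin θ^2) - Real.sqrt (1 - k^2 * Real.sin θ^2) with hfdef
  have hcont_in : Continuous fun θ : ℝ => 1 - k^2 * Real.sin θ^2 := by fun_prop
  have hcf : Continuous f := by
    apply Continuous.sub
    · exact continuous_const.div hcont_in.sqrt fun θ => (Real.sqrt_pos.2 (hinpos θ)).ne'
    · exact hcont_in.sqrt
  -- G, τ and their properties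
  set G : ℝ → ℝ := fun x => Real.sqrt (ν^2 + 4 * Real.sinh x^2) with hGdef
  have hGin : ∀ x : ℝ, 0 < ν^2 + 4 * Real.sinh x^2 := fun x => by nlinarith [sq_nonneg (Real.sinh x)]
  have hGpos : ∀ x : ℝ, 0 < G x := fun x => Real.sqrt_pos.2 (hGin x)
  have hGsq : ∀ x : ℝ, (G x)^2 = ν^2 + 4 * Real.sinh x^2 := fun x => Real.sq_sqrt (hGin x).le
  have hG2c : ∀ x : ℝ, 2 * Real.cosh x ≤ G x := by
    intro x
    nlinarith [hGsq x, hGpos x, Real.cosh_pos x, Real.cosh_sq x]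
  have hGderiv : ∀ x : ℝ, HasDerivAt G (4 * Real.sinh x * Real.cosh x / G x) x := by
    intro x
    have h1 : HasDerivAt (fun y : ℝ => ν^2 + 4 * Real.sinh y^2)
        (4 * (2 * Real.sinh x ^ 1 * Real.cosh x)) x :=
      (((Real.hasDerivAt_sinh x).pow 2).const_mul 4).const_add (ν^2)
    have h2 := (Real.hasDerivAt_sqrt (hGin x).ne').comp x h1
    refine h2.congr_deriv ?_
    simp only [hGdef]
    field_simp
  set τ : ℝ → ℝ := fun x => Real.sinh x / Real.cosh x with hτdef
  have hτderiv : ∀ x : ℝ, HasDerivAt τ (1 / Real.cosh x^2) x := by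
    intro x
    have h := (Real.hasDerivAt_sinh x).div (Real.hasDerivAt_cosh x) (Real.cosh_pos x).ne'
    refine h.congr_deriv ?_
    rw [show Real.cosh x * Real.cosh x - Real.sinh x * Real.sinh x
        = Real.cosh x ^2 - Real.sinh x^2 by ring, Real.cosh_sq_sub_sinh_sq]
  have hτlt : ∀ x : ℝ, τ x < 1 := fun x => (div_lt_one (Real.cosh_pos x)).2 (Real.sinh_lt_cosh x)
  have hτgt : ∀ x : ℝ, -1 < τ x := by
    intro x
    rw [hτdef, neg_lt, ← neg_div]
    exact (div_lt_one (Real.cosh_pos x)).2 (by simpa using Real.sinh_lt_cosh (-x))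
  have hsq1τ : ∀ x : ℝ, 1 - τ x^2 = (1 / Real.cosh x)^2 := by
    intro x
    have := Real.cosh_sq_sub_sinh_sq x
    simp only [hτdef]
    field_simp
    linarith
  have hsqrt1τ : ∀ x : ℝ, Real.sqrt (1 - τ x^2) = 1 / Real.cosh x := by
    intro x
    rw [hsq1τ x, Real.sqrt_sq (by positivity)]
  -- √(1 - k² τ²) = G/(ν cosh)
  have hkτsq : ∀ x : ℝ, 1 - k^2 * τ x^2 = (G x / (ν * Real.cosh x))^2 := by
    intro x
    have h1 := hGsq x
    have h2 := Real.cosh_sq_sub_sinh_sq x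
    have hc := (Real.cosh_pos x).ne'
    rw [hk2, hτdef]
    simp only
    rw [div_pow, div_pow]
    field_simp
    linear_combination ν^2 * h2 - h1
  have hsqrtkτ : ∀ x : ℝ, Real.sqrt (1 - k^2 * τ x^2) = G x / (ν * Real.cosh x) := by
    intro x
    rw [hkτsq x, Real.sqrt_sq (by positivity)]
  -- the primitive I of f
  set I : ℝ → ℝ := fun t => ∫ θ in (0:ℝ)..t, f θ with hIdef
  have hIderiv : ∀ t : ℝ, HasDerivAt I (f t) t := fun t =>
    intervalIntegral.integral_hasDerivAt_right (hcf.intervalIntegrable _ _)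
      (hcf.stronglyMeasurableAtFilter _ _) hcf.continuousAt
  -- the full antiderivative Ψ
  set Ψ : ℝ → ℝ := fun y => ν * I (Real.arcsin (τ y)) + (τ y * (G y - 2 * Real.cosh y))
      + (Real.exp y - Real.exp (-y)) with hΨdef
  have hΨderiv : ∀ x : ℝ, HasDerivAt Ψ (G x) x := by
    intro x
    have harc : HasDerivAt (fun y => Real.arcsin (τ y))
        ((1 / Real.sqrt (1 - τ x^2)) * (1 / Real.cosh x^2)) x :=
      (Real.hasDerivAt_arcsin (hτgt x).ne' (hτlt x).ne).comp x (hτderiv x)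
    have hA : HasDerivAt (fun y => I (Real.arcsin (τ y)))
        (f (Real.arcsin (τ x)) * ((1 / Real.sqrt (1 - τ x^2)) * (1 / Real.cosh x^2))) x :=
      by have := (hIderiv (Real.arcsin (τ x))).comp x harc; exact this
    have hB : HasDerivAt (fun y => τ y * (G y - 2 * Real.cosh y))
        ((1 / Real.cosh x^2) * (G x - 2 * Real.cosh x)
          + τ x * (4 * Real.sinh x * Real.cosh x / G x - 2 * Real.sinh x)) x :=
      (hτderiv x).mul ((hGderiv x).sub ((Real.hasDerivAt_cosh x).const_mul 2))
    have hC : HasDerivAt (fun y : ℝ => Real.exp y - Real.exp (-y))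
        (Real.exp x + Real.exp (-x)) x := by
      have h1 := (Real.hasDerivAt_exp (-x)).comp x (hasDerivAt_neg x)
      have h2 := (Real.hasDerivAt_exp x).sub h1
      refine h2.congr_deriv ?_
      ring
    have hD := ((hA.const_mul ν).add hB).add hC
    refine hD.congr_deriv ?_
    -- value of f at arcsin (τ x)
    have hfval : f (Real.arcsin (τ x))
        = ν * Real.cosh x / G x - G x / (ν * Real.cosh x) := by
      rw [hfdef]
      simp only
      rw [Real.sin_arcsin (hτgt x).le (hτlt x).le, hsqrtkτ x, one_div_div]
    rw [hfval, hsqrt1τ x]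
    have hE : Real.exp x + Real.exp (-x) = 2 * Real.cosh x := by
      rw [Real.cosh_eq]; ring
    rw [hE, one_div_one_div, hτdef]
    have hgsq := hGsq x
    have hcsq := Real.cosh_sq x
    have hg' : (G x) ≠ 0 := (hGpos x).ne'
    have hc' : Real.cosh x ≠ 0 := (Real.cosh_pos x).ne'
    have hν' : ν ≠ 0 := hν0.ne'
    field_simp
    linear_combination (-(Real.cosh x)^2) * hgsq + (2*Real.cosh x*G x) * hcsq
  -- the integrand equals G
  have hGeq : ∀ s : ℝ, Real.sqrt (ν^2 - 2 + 2 * Real.cosh (2*s)) = G s := by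
    intro s
    rw [hGdef]
    congr 1
    rw [Real.cosh_two_mul]
    have := Real.cosh_sq s
    linarith
  have hcontg : Continuous fun s : ℝ => Real.sqrt (ν^2 - 2 + 2 * Real.cosh (2*s)) := by fun_prop
  -- main identity
  have hmain : ∀ x : ℝ, (∫ s in (0:ℝ)..x, Real.sqrt (ν^2 - 2 + 2 * Real.cosh (2*s))) = Ψ x - Ψ 0 := by
    intro x
    apply intervalIntegral.integral_eq_sub_of_hasDerivAt
    · intro t _
      rw [hGeq t]
      exact hΨderiv t
    · exact hcontg.intervalIntegrable _ _
  have hΨ0 : Ψ 0 = 0 := by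
    rw [hΨdef]
    simp [hτdef, hIdef]
  -- K - E = I (π/2)
  have hKE : ellipticK k - ellipticE k = I (Real.pi/2) := by
    rw [ellipticK, ellipticE, hIdef]
    simp only
    rw [← intervalIntegral.integral_sub]
    · exact (continuous_const.div hcont_in.sqrt fun θ =>
        (Real.sqrt_pos.2 (hinpos θ)).ne').intervalIntegrable _ _
    · exact hcont_in.sqrt.intervalIntegrable _ _
  clear_value f G τ I Ψ
  -- bound on f
  have hsqle : ∀ θ : ℝ, 2/ν ≤ Real.sqrt (1 - k^2 * Real.sin θ^2) := by
    intro θ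
    rw [Real.le_sqrt (by positivity) (hinpos θ).le]
    calc (2/ν)^2 = 1 - (ν^2-4)/ν^2 := by field_simp; ring
    _ = 1 - k^2 := by rw [hk2]
    _ ≤ _ := hin θ
  have hfbound : ∀ θ : ℝ, |f θ| ≤ ν/2 := by
    intro θ
    have h1 : Real.sqrt (1 - k^2 * Real.sin θ^2) ≤ 1 := by
      rw [Real.sqrt_le_one]
      nlinarith [sq_nonneg (k * Real.sin θ)]
    have h2 : (0:ℝ) < 2/ν := by positivity
    have h3 := hsqle θ
    have h4 : 1 / Real.sqrt (1 - k^2 * Real.sin θ^2) ≤ 1/(2/ν) :=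
      one_div_le_one_div_of_le h2 h3
    have h5 : (1:ℝ)/(2/ν) = ν/2 := by field_simp
    have h6 : 1 ≤ 1 / Real.sqrt (1 - k^2 * Real.sin θ^2) := by
      rw [le_div_iff₀ (lt_of_lt_of_le h2 h3)]
      linarith
    rw [hfdef]
    simp only
    rw [abs_le]
    constructor
    · nlinarith
    · nlinarith [Real.sqrt_nonneg (1 - k^2 * Real.sin θ^2)]
  -- 1/cosh x ≤ 2 exp(-x)
  have hsech : ∀ x : ℝ, 1 / Real.cosh x ≤ 2 * Real.exp (-x) := by
    intro x
    rw [div_le_iff₀ (Real.cosh_pos x), Real.cosh_eq]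
    have hme : Real.exp (-x) * Real.exp x = 1 := by rw [← Real.exp_add]; simp
    nlinarith [hme, sq_nonneg (Real.exp (-x))]
  -- tail bound on the elliptic part, for x ≥ 0
  have htail : ∀ x : ℝ, 0 ≤ x →
      |I (Real.arcsin (τ x)) - I (Real.pi/2)| ≤ (ν/2) * (Real.pi * Real.exp (-x)) := by
    intro x hx
    set t := Real.arcsin (τ x) with htdef
    have hsplit : I t + (∫ θ in t..(Real.pi/2), f θ) = I (Real.pi/2) := by
      simp only [hIdef]
      exact intervalIntegral.integral_add_adjacent_intervals
        (hcf.intervalIntegrable _ _) (hcf.intervalIntegrable _ _)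
    have ht0 : 0 ≤ t := Real.arcsin_nonneg.2 (by
      simp only [hτdef]
      exact div_nonneg (Real.sinh_nonneg_iff.2 hx) (Real.cosh_pos x).le)
    have htπ : t ≤ Real.pi/2 := Real.arcsin_le_pi_div_two _
    -- Jordan inequality bound on π/2 - t
    have hαpos : 0 ≤ Real.pi/2 - t := by linarith
    have hαle : Real.pi/2 - t ≤ Real.pi/2 := by linarith
    have hJ := Real.mul_le_sin hαpos hαle
    have hsin : Real.sin (Real.pi/2 - t) = 1 / Real.cosh x := by
      rw [Real.sin_pi_div_two_sub, htdef, Real.cos_arcsin, ← hsqrt1τ x]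
    have hπpos := Real.pi_pos
    have hα : Real.pi/2 - t ≤ Real.pi * Real.exp (-x) := by
      have h2 := hsech x
      rw [hsin] at hJ
      have h3 : 2 / Real.pi * (Real.pi/2 - t) ≤ 2 * Real.exp (-x) := le_trans hJ h2
      have h4 := mul_le_mul_of_nonneg_left h3 (by positivity : (0:ℝ) ≤ Real.pi/2)
      calc Real.pi/2 - t = Real.pi/2 * (2/Real.pi * (Real.pi/2 - t)) := by field_simp
      _ ≤ Real.pi/2 * (2 * Real.exp (-x)) := h4
      _ = Real.pi * Real.exp (-x) := by ring
    have hbound : |∫ θ in t..(Real.pi/2), f θ| ≤ (ν/2) * |Real.pi/2 - t| := by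
      have := intervalIntegral.norm_integral_le_of_norm_le_const
        (C := ν/2) (f := f) (a := t) (b := Real.pi/2) (fun θ _ => hfbound θ)
      simpa [Real.norm_eq_abs, abs_sub_comm] using this
    have h7 : I t - I (Real.pi/2) = -(∫ θ in t..(Real.pi/2), f θ) := by linarith
    rw [h7, abs_neg]
    calc |∫ θ in t..(Real.pi/2), f θ| ≤ (ν/2) * |Real.pi/2 - t| := hbound
    _ = (ν/2) * (Real.pi/2 - t) := by rw [abs_of_nonneg hαpos]
    _ ≤ (ν/2) * (Real.pi * Real.exp (-x)) := by
        apply mul_le_mul_of_nonneg_left hα (by positivity)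
  -- bound on H
  have hHbound : ∀ x : ℝ, 0 ≤ x →
      |τ x * (G x - 2 * Real.cosh x)| ≤ (ν^2-4)/2 * Real.exp (-x) := by
    intro x hx
    have hτ0 : 0 ≤ τ x := by
      simp only [hτdef]
      exact div_nonneg (Real.sinh_nonneg_iff.2 hx) (Real.cosh_pos x).le
    have hτ1 : τ x ≤ 1 := (hτlt x).le
    have hg2c := hG2c x
    have hexc : Real.exp x ≤ 2 * Real.cosh x := by
      rw [Real.cosh_eq]
      have := Real.exp_pos (-x)
      linarith
    have hA0 : 0 ≤ G x - 2 * Real.cosh x := sub_nonneg.2 hg2c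
    have hB0 : 0 ≤ G x + 2 * Real.cosh x - 2 * Real.exp x := by linarith [Real.cosh_pos x]
    have hprod : (G x - 2 * Real.cosh x) * (G x + 2 * Real.cosh x) = ν^2 - 4 := by
      have h1 := hGsq x
      have h2 := Real.cosh_sq x
      linear_combination h1 - 4*h2
    have hkey : (G x - 2 * Real.cosh x) * (2 * Real.exp x) ≤ ν^2 - 4 := by
      nlinarith [mul_nonneg hA0 hB0, hprod]
    have hgd : G x - 2 * Real.cosh x ≤ (ν^2-4)/2 * Real.exp (-x) := by
      have h3 : G x - 2 * Real.cosh x ≤ (ν^2-4)/(2*Real.exp x) := by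
        rw [le_div_iff₀ (by positivity : (0:ℝ) < 2*Real.exp x)]
        linarith [hkey]
      calc G x - 2 * Real.cosh x ≤ (ν^2-4)/(2*Real.exp x) := h3
      _ = (ν^2-4)/2 * Real.exp (-x) := by rw [Real.exp_neg]; ring
    rw [abs_of_nonneg (mul_nonneg hτ0 (sub_nonneg.2 hg2c))]
    calc τ x * (G x - 2 * Real.cosh x) ≤ 1 * (G x - 2 * Real.cosh x) :=
      mul_le_mul_of_nonneg_right hτ1 (sub_nonneg.2 hg2c)
    _ = G x - 2 * Real.cosh x := one_mul _
    _ ≤ _ := hgd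
  -- conclude
  rw [isBigO_iff]
  refine ⟨ν * (ν/2) * Real.pi + (ν^2-4)/2 + 1, ?_⟩
  filter_upwards [eventually_ge_atTop (0:ℝ)] with x hx
  have hT : (∫ s in (0:ℝ)..x, Real.sqrt (ν^2 - 2 + 2 * Real.cosh (2*s)))
      - ν * (ellipticK k - ellipticE k) - Real.exp x
      = ν * (I (Real.arcsin (τ x)) - I (Real.pi/2))
        + τ x * (G x - 2 * Real.cosh x) - Real.exp (-x) := by
    rw [hmain x, hΨ0, hKE, hΨdef]
    ring
  rw [Real.norm_eq_abs, Real.norm_eq_abs]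
  calc |(∫ s in (0:ℝ)..x, Real.sqrt (ν ^ 2 - 2 + 2 * Real.cosh (2 * s)))
          - ν * (ellipticK k - ellipticE k) - Real.exp x|
      = |ν * (I (Real.arcsin (τ x)) - I (Real.pi/2))
          + τ x * (G x - 2 * Real.cosh x) - Real.exp (-x)| := by rw [hT]
    _ ≤ |ν * (I (Real.arcsin (τ x)) - I (Real.pi/2))|
          + |τ x * (G x - 2 * Real.cosh x)| + |Real.exp (-x)| := by
        calc _ ≤ |ν * (I (Real.arcsin (τ x)) - I (Real.pi/2))
              + τ x * (G x - 2 * Real.cosh x)| + |Real.exp (-x)| := abs_sub _ _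
        _ ≤ _ := by gcongr; exact abs_add_le _ _
    _ ≤ ν * ((ν/2) * (Real.pi * Real.exp (-x))) + (ν^2-4)/2 * Real.exp (-x)
          + Real.exp (-x) := by
        gcongr
        · rw [abs_mul, abs_of_nonneg hν0.le]
          exact mul_le_mul_of_nonneg_left (htail x hx) hν0.le
        · exact hHbound x hx
        · rw [abs_of_nonneg (Real.exp_pos _).le]
    _ = (ν * (ν/2) * Real.pi + (ν^2-4)/2 + 1) * Real.exp (-x) := by ring
    _ = (ν * (ν/2) * Real.pi + (ν^2-4)/2 + 1) * |Real.exp (-x)| := by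
        rw [abs_of_nonneg (Real.exp_pos _).le]
end
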